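/- Inverse expansion: for nonnegative integers n, m, r, z^n · B_m(z; r+n) = Σ_{j=0}^{n} s_r(n+r, j+r) · (−1)^{n−j} · B_{m+j}(z; r), where s_r(n+r, j+r) is the unsigned r-Stirling number of the first kind, as an identity of polynomials in z. -/

import Mathlib

open Finset

/-- `𝒜` is a set partition of `Fin N`: blocks are nonempty and every element
lies in exactly one block. -/
def IsSetPartition {N : ℕ} (𝒜 : Finset (Finset (Fin N))) : Prop :=
  (∀ t ∈ 𝒜, t.Nonempty) ∧ ∀ x : Fin N, ∃! t, t ∈ 𝒜 ∧ x ∈ t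

/-- The elements of `S` lie in pairwise distinct blocks of `𝒜`. -/
def DistinctBlocks {N : ℕ} (𝒜 : Finset (Finset (Fin N))) (S : Set (Fin N)) : Prop :=
  ∀ a ∈ S, ∀ b ∈ S, a ≠ b → ∀ t ∈ 𝒜, ¬(a ∈ t ∧ b ∈ t)

/-- The `r`-Stirling number of the second kind `{n+r brace k+r}_r`: the number of
partitions of `{1,…,n+r}` into `k+r` nonempty blocks with `1,…,r` in distinct blocks. -/
noncomputable def rStirling (r n k : ℕ) : ℕ :=
  Nat.card {𝒜 : Finset (Finset (Fin (n + r))) //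
    IsSetPartition 𝒜 ∧ 𝒜.card = k + r ∧ DistinctBlocks 𝒜 {x | (x : ℕ) < r}}

/-- The `(r₁,r₂)`-Stirling number of the second kind `{n+r₁+r₂ brace k+r₂}_{r₁,r₂}`. -/
noncomputable def rrStirling (r₁ r₂ n k : ℕ) : ℕ :=
  Nat.card {𝒜 : Finset (Finset (Fin (n + r₁ + r₂))) //
    IsSetPartition 𝒜 ∧ 𝒜.card = k + r₂ ∧
    DistinctBlocks 𝒜 {x | (x : ℕ) < r₁} ∧
    DistinctBlocks 𝒜 {x | r₁ ≤ (x : ℕ) ∧ (x : ℕ) < r₁ + r₂}}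

/-- The `r`-Bell polynomial `B_n(z;r) = Σ_{k=0}^n {n+r brace k+r}_r z^k`. -/
noncomputable def rBell (r n : ℕ) (z : ℝ) : ℝ :=
  ∑ k ∈ range (n + 1), (rStirling r n k : ℝ) * z ^ k

/-- The `(r₁,r₂)`-Bell polynomial `B_n(z;r₁,r₂) = Σ_{k=0}^{n+r₁} {n+r₁+r₂ brace k+r₂}_{r₁,r₂} z^k`. -/
noncomputable def rrBell (r₁ r₂ n : ℕ) (z : ℝ) : ℝ :=
  ∑ k ∈ range (n + r₁ + 1), (rrStirling r₁ r₂ n k : ℝ) * z ^ k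

/-- The unsigned $r$-Stirling number of the first kind $s_r(n+r, k+r)$: the number of
permutations of $\{1,\dots,n+r\}$ with $k+r$ cycles (counting fixed points as cycles)
such that $1,\dots,r$ lie in distinct cycles. -/
noncomputable def rStirlingFirst (r n k : ℕ) : ℕ :=
  Nat.card {σ : Equiv.Perm (Fin (n + r)) //
    (Multiset.card σ.cycleType + (univ.filter fun x => σ x = x).card = k + r) ∧
    ∀ a b : Fin (n + r), (a : ℕ) < r → (b : ℕ) < r → a ≠ b → ¬σ.SameCycle a b}


open Equiv Equiv.Perm

set_option linter.unusedSectionVars false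

variable {α : Type*} [Fintype α] [DecidableEq α]

/-- The cycle (orbit) of `x` under `σ` as a finset. -/
def cycClass (σ : Perm α) (x : α) : Finset α := univ.filter (σ.SameCycle x)

lemma mem_cycClass {σ : Perm α} {x y : α} : y ∈ cycClass σ x ↔ σ.SameCycle x y := by
  simp [cycClass]

lemma cycClass_eq_iff {σ : Perm α} {x y : α} :
    cycClass σ x = cycClass σ y ↔ σ.SameCycle x y := by
  constructor
  · intro h
    have : y ∈ cycClass σ y := mem_cycClass.2 (SameCycle.refl _ _)
    rw [← h] at this; exact mem_cycClass.1 this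
  · intro h
    ext z; simp only [mem_cycClass]
    exact ⟨fun hz => (h.symm.trans hz), fun hz => h.trans hz⟩

/-- Number of cycles of `σ`, counting fixed points as cycles. -/
def cycCount (σ : Perm α) : ℕ := (univ.image (cycClass σ)).card

lemma cycCount_le (σ : Perm α) : cycCount σ ≤ Fintype.card α := by
  simpa [cycCount] using (Finset.card_image_le (s := univ) (f := cycClass σ))

lemma cycClass_of_fixed {σ : Perm α} {x : α} (h : σ x = x) : cycClass σ x = {x} := by
  ext y; simp only [mem_cycClass, Finset.mem_singleton]
  exact ⟨fun hy => (hy.eq_of_left h).symm, fun hy => hy ▸ SameCycle.refl _ _⟩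

lemma cycClass_of_support {σ : Perm α} {x : α} (h : x ∈ σ.support) :
    cycClass σ x = (σ.cycleOf x).support := by
  ext y
  simp only [mem_cycClass, Equiv.Perm.mem_support_cycleOf_iff]
  exact ⟨fun hy => ⟨hy, h⟩, fun hy => hy.1⟩

lemma cycCount_eq (σ : Perm α) :
    cycCount σ = Multiset.card σ.cycleType + (univ.filter fun x => σ x = x).card := by
  classical
  have hsplit : (univ : Finset α) = σ.support ∪ (univ.filter fun x => σ x = x) := by
    ext x; simp only [Finset.mem_union, Equiv.Perm.mem_support, Finset.mem_filter,
      Finset.mem_univ, true_and, true_iff]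
    tauto
  have himg : univ.image (cycClass σ) =
      σ.support.image (cycClass σ) ∪ (univ.filter fun x => σ x = x).image (cycClass σ) := by
    conv_lhs => rw [hsplit]
    rw [Finset.image_union]
  have hdisj : Disjoint (σ.support.image (cycClass σ))
      ((univ.filter fun x => σ x = x).image (cycClass σ)) := by
    rw [Finset.disjoint_left]
    rintro t ht ht'
    obtain ⟨x, hx, rfl⟩ := Finset.mem_image.1 ht
    obtain ⟨y, hy, hxy⟩ := Finset.mem_image.1 ht'
    rw [Finset.mem_filter] at hy
    rw [cycClass_of_fixed hy.2] at hxy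
    have hσx : σ x ∈ cycClass σ x := mem_cycClass.2 ⟨1, by simp⟩
    have hxx : x ∈ cycClass σ x := mem_cycClass.2 (SameCycle.refl _ _)
    rw [← hxy] at hσx hxx
    simp only [Finset.mem_singleton] at hσx hxx
    exact (Equiv.Perm.mem_support.1 hx) (by rw [hσx, hxx])
  have hfixcard : ((univ.filter fun x => σ x = x).image (cycClass σ)).card
      = (univ.filter fun x => σ x = x).card := by
    rw [Finset.card_image_of_injOn]
    intro x hx y hy hxy
    rw [Finset.mem_coe, Finset.mem_filter] at hx hy
    rw [cycClass_of_fixed hx.2, cycClass_of_fixed hy.2] at hxy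
    exact Finset.singleton_injective hxy
  have hsupimg : σ.support.image (cycClass σ) = σ.cycleFactorsFinset.image Equiv.Perm.support := by
    ext t
    simp only [Finset.mem_image]
    constructor
    · rintro ⟨x, hx, rfl⟩
      exact ⟨σ.cycleOf x, Equiv.Perm.cycleOf_mem_cycleFactorsFinset_iff.2 hx,
        (cycClass_of_support hx).symm⟩
    · rintro ⟨c, hc, rfl⟩
      have hcyc : c.IsCycle := (Equiv.Perm.mem_cycleFactorsFinset_iff.1 hc).1
      obtain ⟨a, ha⟩ := hcyc.nonempty_support
      have hac : c = σ.cycleOf a := Equiv.Perm.cycle_is_cycleOf ha hc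
      have haσ : a ∈ σ.support := by
        rw [Equiv.Perm.mem_support]
        rw [← (Equiv.Perm.mem_cycleFactorsFinset_iff.1 hc).2 a ha]
        exact Equiv.Perm.mem_support.1 ha
      exact ⟨a, haσ, by rw [cycClass_of_support haσ, ← hac]⟩
  have hsupcard : (σ.cycleFactorsFinset.image Equiv.Perm.support).card
      = Multiset.card σ.cycleType := by
    rw [Finset.card_image_of_injOn, Equiv.Perm.cycleType_def, Multiset.card_map]
    · rfl
    · intro c hc d hd hcd
      rw [Finset.mem_coe] at hc hd
      have hcyc : c.IsCycle := (Equiv.Perm.mem_cycleFactorsFinset_iff.1 hc).1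
      obtain ⟨a, ha⟩ := hcyc.nonempty_support
      have hac : c = σ.cycleOf a := Equiv.Perm.cycle_is_cycleOf ha hc
      have had : d = σ.cycleOf a := Equiv.Perm.cycle_is_cycleOf (hcd ▸ ha) hd
      rw [hac, had]
  rw [cycCount, himg, Finset.card_union_of_disjoint hdisj, hfixcard, hsupimg, hsupcard]

section Transport
variable {β : Type*} [Fintype β] [DecidableEq β] {γ : Type*} [Fintype γ] [DecidableEq γ]

lemma permCongr_pow (q : β ≃ γ) (σ : Perm β) (i : ℕ) :
    (q.permCongr σ) ^ i = q.permCongr (σ ^ i) := by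
  induction i with
  | zero =>
    ext x; simp
  | succ i ih =>
    ext x
    simp only [pow_succ, Equiv.Perm.mul_apply, ih, Equiv.permCongr_apply, Equiv.symm_apply_apply]

lemma sameCycle_permCongr {q : β ≃ γ} {σ : Perm β} {x y : β} :
    (q.permCongr σ).SameCycle (q x) (q y) ↔ σ.SameCycle x y := by
  constructor
  · rintro h
    obtain ⟨i, hi, hix⟩ := h.exists_pow_eq'
    rw [permCongr_pow] at hix
    simp only [Equiv.permCongr_apply, Equiv.symm_apply_apply] at hix
    exact ⟨i, by rw [zpow_natCast]; exact q.injective hix⟩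
  · rintro h
    obtain ⟨i, hi, hix⟩ := h.exists_pow_eq'
    refine ⟨i, ?_⟩
    rw [zpow_natCast, permCongr_pow]
    simp [hix]

/-- helper: images of two "class maps" with the same fibers have equal cardinality. -/
lemma card_image_eq_card_image {s : Finset β} {δ ε : Type*} [DecidableEq δ] [DecidableEq ε]
    {f : β → δ} {g : β → ε} (h : ∀ x ∈ s, ∀ y ∈ s, f x = f y ↔ g x = g y) :
    (s.image f).card = (s.image g).card := by
  classical
  refine Finset.card_bij (fun t ht => g (Finset.mem_image.1 ht).choose) ?_ ?_ ?_
  · intro t ht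
    obtain ⟨hx, hfx⟩ := (Finset.mem_image.1 ht).choose_spec
    exact Finset.mem_image.2 ⟨_, hx, rfl⟩
  · intro t ht t' ht' hgg
    obtain ⟨hx, hfx⟩ := (Finset.mem_image.1 ht).choose_spec
    obtain ⟨hx', hfx'⟩ := (Finset.mem_image.1 ht').choose_spec
    rw [← hfx, ← hfx']
    exact ((h _ hx _ hx').2 hgg)
  · intro u hu
    obtain ⟨y, hy, rfl⟩ := Finset.mem_image.1 hu
    refine ⟨f y, Finset.mem_image.2 ⟨y, hy, rfl⟩, ?_⟩
    have := (Finset.mem_image.1 (Finset.mem_image.2 ⟨y, hy, rfl⟩ : f y ∈ s.image f))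
    obtain ⟨hx, hfx⟩ := this.choose_spec
    exact (((h _ hx _ hy).1 hfx).symm : g y = _).symm ▸ rfl

lemma cycCount_permCongr (q : β ≃ γ) (σ : Perm β) :
    cycCount (q.permCongr σ) = cycCount σ := by
  classical
  have huniv : (univ : Finset γ) = univ.image q := by
    ext x; simp only [Finset.mem_univ, true_iff, Finset.mem_image]
    exact ⟨q.symm x, by simp⟩
  unfold cycCount
  rw [huniv, Finset.image_image]
  exact card_image_eq_card_image (fun x _ y _ => by
    rw [Function.comp_apply, Function.comp_apply, cycClass_eq_iff, cycClass_eq_iff,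
      sameCycle_permCongr])

end Transport

section Splice
set_option linter.unusedSectionVars false
variable {β : Type*} [Fintype β] [DecidableEq β]

lemma optionCongr_pow (e : Perm β) (i : ℕ) : ∀ x : β,
    ((e.optionCongr : Perm (Option β)) ^ i) (some x) = some ((e ^ i) x) := by
  induction i with
  | zero => intro x; simp
  | succ i ih =>
    intro x
    rw [pow_succ, Equiv.Perm.mul_apply, pow_succ, Equiv.Perm.mul_apply]
    rw [show (e.optionCongr : Perm (Option β)) (some x) = some (e x) by simp, ih]

lemma optionCongr_pow_none (e : Perm β) (i : ℕ) :
    ((e.optionCongr : Perm (Option β)) ^ i) none = none := by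
  induction i with
  | zero => simp
  | succ i ih => simp [pow_succ, Equiv.Perm.mul_apply, ih]

lemma sameCycle_optionCongr {e : Perm β} {x y : β} :
    Equiv.Perm.SameCycle (e.optionCongr : Perm (Option β)) (some x) (some y) ↔ e.SameCycle x y := by
  constructor
  · rintro h
    obtain ⟨i, hi, hix⟩ := h.exists_pow_eq'
    rw [optionCongr_pow] at hix
    exact ⟨i, by rw [zpow_natCast]; exact Option.some_injective _ hix⟩
  · rintro h
    obtain ⟨i, hi, hix⟩ := h.exists_pow_eq'
    exact ⟨i, by rw [zpow_natCast, optionCongr_pow, hix]⟩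

lemma not_sameCycle_optionCongr_none {e : Perm β} {y : β} :
    ¬ Equiv.Perm.SameCycle (e.optionCongr : Perm (Option β)) none (some y) := by
  intro h
  have := h.eq_of_left (by simp [Function.IsFixedPt])
  simp at this

lemma cycCount_optionCongr (e : Perm β) :
    cycCount (e.optionCongr : Perm (Option β)) = cycCount e + 1 := by
  classical
  have hclassnone : cycClass (e.optionCongr : Perm (Option β)) none = {none} :=
    cycClass_of_fixed (by simp)
  have himg : (univ : Finset (Option β)).image (cycClass e.optionCongr) =
      insert {none} ((univ : Finset β).image
        (fun x => cycClass (e.optionCongr : Perm (Option β)) (some x))) := by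
    ext t
    simp only [Finset.mem_image, Finset.mem_insert, Finset.mem_univ, true_and]
    constructor
    · rintro ⟨u, -, rfl⟩
      match u with
      | none => exact Or.inl hclassnone
      | some x => exact Or.inr ⟨x, rfl⟩
    · rintro (rfl | ⟨x, rfl⟩)
      · exact ⟨none, hclassnone⟩
      · exact ⟨some x, rfl⟩
  rw [cycCount, himg, Finset.card_insert_of_notMem]
  · congr 1
    unfold cycCount
    exact card_image_eq_card_image
      (f := fun x => cycClass (e.optionCongr : Perm (Option β)) (some x)) (g := cycClass e)
      (fun x _ y _ => by
        rw [cycClass_eq_iff, cycClass_eq_iff, sameCycle_optionCongr])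
  · intro hmem
    obtain ⟨x, -, hx⟩ := Finset.mem_image.1 hmem
    have : some x ∈ cycClass (e.optionCongr : Perm (Option β)) (some x) :=
      mem_cycClass.2 (SameCycle.refl _ _)
    rw [hx] at this
    simp at this

end Splice

section Splice2
set_option linter.unusedSectionVars false
variable {β : Type*} [Fintype β] [DecidableEq β]

lemma sameCycle_apply_self' {γ : Type*} (f : Perm γ) (u : γ) : f.SameCycle u (f u) :=
  ⟨1, by simp⟩

variable (e : Perm β) (a : β)

local notation "σp" => (Equiv.swap (none : Option β) (some a) * e.optionCongr : Perm (Option β))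

lemma σp_none : σp none = some a := by
  simp [Equiv.Perm.mul_apply, Equiv.swap_apply_left]

lemma σp_some (x : β) : σp (some x) = if e x = a then none else some (e x) := by
  by_cases h : e x = a
  · simp [Equiv.Perm.mul_apply, h, Equiv.swap_apply_right]
  · have : (some (e x) : Option β) ≠ none := by simp
    simp only [Equiv.Perm.mul_apply, if_neg h]
    rw [show (e.optionCongr : Perm (Option β)) (some x) = some (e x) by simp]
    exact Equiv.swap_apply_of_ne_of_ne this (by simpa using h)

lemma σp_step (x : β) : Equiv.Perm.SameCycle σp (some x) (some (e x)) := by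
  by_cases h : e x = a
  · have h1 : σp (some x) = none := by rw [σp_some]; simp [h]
    have h2 : Equiv.Perm.SameCycle σp (some x) none := by
      have := sameCycle_apply_self' σp (some x); rwa [h1] at this
    have h3 : Equiv.Perm.SameCycle σp none (some a) := by
      have := sameCycle_apply_self' σp none; rwa [σp_none] at this
    rw [h]; exact h2.trans h3
  · have h1 : σp (some x) = some (e x) := by rw [σp_some]; simp [h]
    have := sameCycle_apply_self' σp (some x); rwa [h1] at this

lemma σp_invariant (x : β) : ∀ i : ℕ,
    ((σp ^ i) (some x) = none → e.SameCycle x a) ∧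
    (∀ z : β, (σp ^ i) (some x) = some z → e.SameCycle x z) := by
  intro i
  induction i with
  | zero =>
    constructor
    · intro h; simp at h
    · intro z h; simp only [pow_zero, Equiv.Perm.one_apply, Option.some.injEq] at h
      exact h ▸ Equiv.Perm.SameCycle.refl _ _
  | succ i ih =>
    have hstep : (σp ^ (i+1)) (some x) = σp ((σp ^ i) (some x)) := by
      rw [pow_succ', Equiv.Perm.mul_apply]
    cases hu : (σp ^ i) (some x) with
    | none =>
      rw [hu, σp_none] at hstep
      constructor
      · intro h; rw [hstep] at h; simp at h
      · intro z h; rw [hstep] at h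
        simp only [Option.some.injEq] at h
        exact h ▸ ih.1 hu
    | some z =>
      have hz : e.SameCycle x z := ih.2 z hu
      rw [hu, σp_some] at hstep
      by_cases h : e z = a
      · rw [if_pos h] at hstep
        constructor
        · intro _; exact h ▸ hz.trans (sameCycle_apply_self' e z)
        · intro z' h'; rw [hstep] at h'; simp at h'
      · rw [if_neg h] at hstep
        constructor
        · intro h'; rw [hstep] at h'; simp at h'
        · intro z' h'; rw [hstep] at h'
          simp only [Option.some.injEq] at h'
          exact h' ▸ hz.trans (sameCycle_apply_self' e z)

lemma σp_sameCycle_some (x y : β) :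
    Equiv.Perm.SameCycle σp (some x) (some y) ↔ e.SameCycle x y := by
  constructor
  · intro h
    obtain ⟨i, hi, hix⟩ := h.exists_pow_eq'
    exact (σp_invariant e a x i).2 y hix
  · intro h
    obtain ⟨i, hi, hix⟩ := h.exists_pow_eq'
    have : ∀ j : ℕ, Equiv.Perm.SameCycle σp (some x) (some ((e ^ j) x)) := by
      intro j
      induction j with
      | zero =>
        simp only [pow_zero, Equiv.Perm.one_apply]
        exact Equiv.Perm.SameCycle.refl _ _
      | succ j ihj =>
        rw [pow_succ', Equiv.Perm.mul_apply]
        exact ihj.trans (σp_step e a _)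
    have := this i
    rwa [hix] at this

lemma σp_sameCycle_none (y : β) :
    Equiv.Perm.SameCycle σp none (some y) ↔ e.SameCycle a y := by
  have h3 : Equiv.Perm.SameCycle σp none (some a) := by
    have := sameCycle_apply_self' σp none; rwa [σp_none] at this
  constructor
  · intro h; exact (σp_sameCycle_some e a a y).1 (h3.symm.trans h)
  · intro h; exact h3.trans ((σp_sameCycle_some e a a y).2 h)

lemma cycCount_σp : cycCount σp = cycCount e := by
  classical
  have hceq : cycClass σp none = cycClass σp (some a) := by
    rw [cycClass_eq_iff]
    have := sameCycle_apply_self' σp none; rwa [σp_none] at this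
  have himg : (univ : Finset (Option β)).image (cycClass σp) =
      (univ : Finset β).image (fun x => cycClass σp (some x)) := by
    ext t
    simp only [Finset.mem_image, Finset.mem_univ, true_and]
    constructor
    · rintro ⟨u, rfl⟩
      match u with
      | none => exact ⟨a, hceq.symm⟩
      | some x => exact ⟨x, rfl⟩
    · rintro ⟨x, rfl⟩
      exact ⟨some x, rfl⟩
  rw [cycCount, himg]
  unfold cycCount
  exact card_image_eq_card_image (fun x _ y _ => by
    rw [cycClass_eq_iff, cycClass_eq_iff, σp_sameCycle_some])

end Splice2

section PermRec

/-- specials-in-distinct-cycles predicate -/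
def speF (r M : ℕ) (σ : Perm (Fin M)) : Prop :=
  ∀ a b : Fin M, (a : ℕ) < r → (b : ℕ) < r → a ≠ b → ¬σ.SameCycle a b

lemma card_filter_val_lt {M r : ℕ} (h : r ≤ M) :
    ((univ : Finset (Fin M)).filter (fun x : Fin M => (x : ℕ) < r)).card = r := by
  have : (univ : Finset (Fin M)).filter (fun x : Fin M => (x : ℕ) < r)
      = (univ : Finset (Fin r)).map (Fin.castLEEmb h) := by
    ext x
    simp only [Finset.mem_filter, Finset.mem_univ, true_and, Finset.mem_map,
      Fin.castLEEmb_apply]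
    constructor
    · intro hx; exact ⟨⟨(x : ℕ), hx⟩, by ext; simp⟩
    · rintro ⟨i, rfl⟩; simpa using i.isLt
  rw [this, Finset.card_map, Finset.card_univ, Fintype.card_fin]

lemma le_cycCount_of_speF {M r : ℕ} (hr : r ≤ M) {σ : Perm (Fin M)} (h : speF r M σ) :
    r ≤ cycCount σ := by
  classical
  set S := (univ : Finset (Fin M)).filter (fun x : Fin M => (x : ℕ) < r) with hS
  have hinj : Set.InjOn (cycClass σ) S := by
    intro x hx y hy hxy
    rw [Finset.mem_coe, hS, Finset.mem_filter] at hx hy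
    by_contra hne
    exact h x y hx.2 hy.2 hne (cycClass_eq_iff.1 hxy)
  have h1 : (S.image (cycClass σ)).card = r := by
    rw [Finset.card_image_of_injOn hinj, card_filter_val_lt hr]
  calc r = (S.image (cycClass σ)).card := h1.symm
    _ ≤ ((univ : Finset (Fin M)).image (cycClass σ)).card :=
        Finset.card_le_card (Finset.image_subset_image (Finset.subset_univ S))
    _ = cycCount σ := rfl

lemma rStirlingFirst_eq_card (r n k : ℕ) :
    rStirlingFirst r n k
      = Nat.card {σ : Perm (Fin (n + r)) // cycCount σ = k + r ∧ speF r (n + r) σ} := by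
  apply Nat.card_congr
  exact Equiv.subtypeEquivRight (fun σ => by rw [cycCount_eq]; exact Iff.rfl)

/-- sigma over an option type splits as a sum -/
def sigmaOptionEquivSum {β : Type*} (F : Option β → Type*) :
    (Σ p : Option β, F p) ≃ F none ⊕ Σ b : β, F (some b) where
  toFun := fun x => match x with
    | ⟨none, e⟩ => Sum.inl e
    | ⟨some b, e⟩ => Sum.inr ⟨b, e⟩
  invFun := fun x => match x with
    | Sum.inl e => ⟨none, e⟩
    | Sum.inr ⟨b, e⟩ => ⟨some b, e⟩
  left_inv := by rintro ⟨(_ | b), e⟩ <;> rfl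
  right_inv := by rintro (e | ⟨b, e⟩) <;> rfl

variable (n r K : ℕ)

private lemma hnr : (n+1) + r = (n+r) + 1 := by omega

/-- the point equivalence -/
noncomputable def qe : Fin ((n+1) + r) ≃ Option (Fin (n + r)) :=
  (finCongr (hnr n r)).trans finSuccEquivLast

lemma qe_apply_of_lt {x : Fin ((n+1)+r)} (hx : (x : ℕ) < n + r) :
    qe n r x = some ⟨(x : ℕ), hx⟩ := by
  have : finCongr (hnr n r) x = Fin.castSucc ⟨(x : ℕ), hx⟩ := by
    ext; simp
  rw [qe, Equiv.trans_apply, this, finSuccEquivLast_castSucc]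

lemma qe_symm_some (b : Fin (n + r)) :
    (qe n r).symm (some b) = ⟨(b : ℕ), by omega⟩ := by
  rw [qe]
  simp only [Equiv.symm_trans_apply, finSuccEquivLast_symm_some]
  ext; simp

lemma perm_pred_transport (σ : Perm (Fin ((n+1)+r))) :
    (cycCount σ = K ∧ speF r ((n+1)+r) σ) ↔
    (cycCount ((qe n r).permCongr σ) = K ∧
      ∀ a b : Fin (n+r), (a : ℕ) < r → (b : ℕ) < r → a ≠ b →
        ¬ Equiv.Perm.SameCycle ((qe n r).permCongr σ) (some a) (some b)) := by
  rw [cycCount_permCongr]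
  apply and_congr Iff.rfl
  constructor
  · intro h a b ha hb hab hsc
    set x := (qe n r).symm (some a) with hxd
    set y := (qe n r).symm (some b) with hyd
    have hqx : qe n r x = some a := (qe n r).apply_symm_apply _
    have hqy : qe n r y = some b := (qe n r).apply_symm_apply _
    have hxv : (x : ℕ) = (a : ℕ) := by rw [hxd, qe_symm_some]
    have hyv : (y : ℕ) = (b : ℕ) := by rw [hyd, qe_symm_some]
    have hxy : x ≠ y := fun hh => hab (by
      apply Option.some_injective
      rw [← hqx, ← hqy, hh])
    apply h x y (hxv ▸ ha) (hyv ▸ hb) hxy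
    have := sameCycle_permCongr (q := qe n r) (σ := σ) (x := x) (y := y)
    rw [hqx, hqy] at this
    exact this.1 hsc
  · intro h x y hx hy hxy hsc
    have hx' : (x : ℕ) < n + r := by omega
    have hy' : (y : ℕ) < n + r := by omega
    have hab : (⟨(x : ℕ), hx'⟩ : Fin (n+r)) ≠ ⟨(y : ℕ), hy'⟩ := by
      intro hh
      apply hxy
      have := congrArg Fin.val hh
      simp only at this
      exact Fin.ext this
    apply h ⟨(x : ℕ), hx'⟩ ⟨(y : ℕ), hy'⟩ hx hy hab
    have := sameCycle_permCongr (q := qe n r) (σ := σ) (x := x) (y := y)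
    rw [qe_apply_of_lt n r hx', qe_apply_of_lt n r hy'] at this
    exact this.2 hsc

noncomputable def permRecEquiv :
    {σ : Perm (Fin ((n+1)+r)) // cycCount σ = K ∧ speF r ((n+1)+r) σ} ≃
    {e : Perm (Fin (n+r)) // cycCount e + 1 = K ∧ speF r (n+r) e} ⊕
      (Fin (n+r) × {e : Perm (Fin (n+r)) // cycCount e = K ∧ speF r (n+r) e}) := by
  classical
  refine (Equiv.subtypeEquiv ((qe n r).permCongr)
    (q := fun τ => cycCount τ = K ∧
      ∀ a b : Fin (n+r), (a : ℕ) < r → (b : ℕ) < r → a ≠ b →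
        ¬ Equiv.Perm.SameCycle τ (some a) (some b))
    (perm_pred_transport n r K)).trans ?_
  refine (Equiv.Perm.decomposeOption.subtypeEquiv (p := _)
    (q := fun pe => cycCount (Equiv.Perm.decomposeOption.symm pe) = K ∧
      ∀ a b : Fin (n+r), (a : ℕ) < r → (b : ℕ) < r → a ≠ b →
        ¬ Equiv.Perm.SameCycle (Equiv.Perm.decomposeOption.symm pe) (some a) (some b))
    (fun τ => by simp only [Equiv.symm_apply_apply])).trans ?_
  refine (Equiv.subtypeProdEquivSigmaSubtype
    (fun (p : Option (Fin (n+r))) (e : Perm (Fin (n+r))) =>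
      cycCount (Equiv.Perm.decomposeOption.symm (p, e)) = K ∧
      ∀ a b : Fin (n+r), (a : ℕ) < r → (b : ℕ) < r → a ≠ b →
        ¬ Equiv.Perm.SameCycle (Equiv.Perm.decomposeOption.symm (p, e)) (some a) (some b))).trans ?_
  refine (sigmaOptionEquivSum _).trans ?_
  refine Equiv.sumCongr ?_ ?_
  · refine Equiv.subtypeEquivRight (fun e => ?_)
    have hd : Equiv.Perm.decomposeOption.symm ((none : Option (Fin (n+r))), e)
        = e.optionCongr := by
      simp [Equiv.Perm.decomposeOption]; rfl
    rw [hd, cycCount_optionCongr]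
    apply and_congr Iff.rfl
    constructor
    · intro h a b ha hb hab hsc
      exact h a b ha hb hab (sameCycle_optionCongr.2 hsc)
    · intro h a b ha hb hab hsc
      exact h a b ha hb hab (sameCycle_optionCongr.1 hsc)
  · refine (Equiv.sigmaCongrRight (fun a => Equiv.subtypeEquivRight
      (q := fun e : Perm (Fin (n+r)) => cycCount e = K ∧ speF r (n+r) e) (fun e => ?_))).trans
      (Equiv.sigmaEquivProd (Fin (n+r)) {e : Perm (Fin (n+r)) // cycCount e = K ∧ speF r (n+r) e})
    have hd : Equiv.Perm.decomposeOption.symm ((some a : Option (Fin (n+r))), e)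
        = Equiv.swap none (some a) * e.optionCongr := by
      simp [Equiv.Perm.decomposeOption]
    rw [hd, cycCount_σp]
    apply and_congr Iff.rfl
    constructor
    · intro h x y hx hy hxy hsc
      exact h x y hx hy hxy ((σp_sameCycle_some e a x y).2 hsc)
    · intro h x y hx hy hxy hsc
      exact h x y hx hy hxy ((σp_sameCycle_some e a x y).1 hsc)

lemma rStirlingFirst_succ_succ (k : ℕ) :
    rStirlingFirst r (n+1) (k+1)
      = rStirlingFirst r n k + (n+r) * rStirlingFirst r n (k+1) := by
  rw [rStirlingFirst_eq_card, rStirlingFirst_eq_card, rStirlingFirst_eq_card]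
  rw [Nat.card_congr (permRecEquiv n r ((k+1)+r))]
  have hfin : Nat.card (Fin (n+r)) = n + r := by simp [Nat.card_eq_fintype_card]
  rw [Nat.card_sum, Nat.card_prod, hfin]
  congr 1
  apply Nat.card_congr
  exact Equiv.subtypeEquivRight (fun e => by
    constructor
    · rintro ⟨h1, h2⟩; exact ⟨by omega, h2⟩
    · rintro ⟨h1, h2⟩; exact ⟨by omega, h2⟩)

lemma rStirlingFirst_succ_zero' :
    rStirlingFirst r (n+1) 0 = (n+r) * rStirlingFirst r n 0 := by
  rw [rStirlingFirst_eq_card, rStirlingFirst_eq_card]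
  rw [Nat.card_congr (permRecEquiv n r (0+r))]
  have hfin : Nat.card (Fin (n+r)) = n + r := by simp [Nat.card_eq_fintype_card]
  rw [Nat.card_sum, Nat.card_prod, hfin]
  have : IsEmpty {e : Perm (Fin (n+r)) // cycCount e + 1 = 0 + r ∧ speF r (n+r) e} := by
    constructor
    rintro ⟨e, h1, h2⟩
    have := le_cycCount_of_speF (by omega) h2
    omega
  rw [Nat.card_of_isEmpty, zero_add]

end PermRec

section PermBase

lemma cycCount_one (M : ℕ) : cycCount (1 : Perm (Fin M)) = M := by
  unfold cycCount
  have h : ∀ x : Fin M, cycClass (1 : Perm (Fin M)) x = {x} :=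
    fun x => cycClass_of_fixed rfl
  calc ((univ : Finset (Fin M)).image (cycClass 1)).card
      = ((univ : Finset (Fin M)).image (fun x => ({x} : Finset (Fin M)))).card := by
        congr 1; exact Finset.image_congr (fun x _ => h x)
    _ = (univ : Finset (Fin M)).card := Finset.card_image_of_injective _
        Finset.singleton_injective
    _ = M := by simp

lemma rStirlingFirst_base (r : ℕ) : rStirlingFirst r 0 0 = 1 := by
  rw [rStirlingFirst_eq_card]
  have hiff : ∀ σ : Perm (Fin (0+r)),
      (cycCount σ = 0 + r ∧ speF r (0+r) σ) ↔ σ = 1 := by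
    intro σ
    constructor
    · rintro ⟨h1, -⟩
      have hsplit : ((univ : Finset (Fin (0+r))).filter (fun x => σ x = x)).card
          + σ.support.card = 0 + r := by
        have : σ.support = (univ : Finset (Fin (0+r))).filter (fun x => ¬ σ x = x) := by
          ext x; simp [Equiv.Perm.mem_support]
        rw [this, Finset.card_filter_add_card_filter_not]
        simp
      have hsum : σ.cycleType.sum = σ.support.card := Equiv.Perm.sum_cycleType σ
      have h2c : Multiset.card σ.cycleType * 2 ≤ σ.cycleType.sum := by
        have := Multiset.card_nsmul_le_sum (s := σ.cycleType) (a := 2)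
          (fun x hx => Equiv.Perm.two_le_of_mem_cycleType hx)
        simpa [smul_eq_mul, mul_comm] using this
      rw [cycCount_eq] at h1
      have : Multiset.card σ.cycleType = 0 := by omega
      exact Equiv.Perm.card_cycleType_eq_zero.1 this
    · rintro rfl
      refine ⟨by simpa using cycCount_one (0+r), ?_⟩
      intro a b ha hb hab hsc
      exact hab (Equiv.Perm.sameCycle_one.1 hsc)
  rw [Nat.card_congr (Equiv.subtypeEquivRight hiff)]
  rw [Nat.card_eq_one_iff_unique]
  exact ⟨⟨fun a b => Subtype.ext (a.2.trans b.2.symm)⟩, ⟨⟨1, rfl⟩⟩⟩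

lemma rStirlingFirst_vanish (r n k : ℕ) (h : n < k) : rStirlingFirst r n k = 0 := by
  rw [rStirlingFirst_eq_card]
  have : IsEmpty {σ : Perm (Fin (n+r)) // cycCount σ = k + r ∧ speF r (n+r) σ} := by
    constructor
    rintro ⟨σ, h1, -⟩
    have := cycCount_le σ
    rw [Fintype.card_fin] at this
    omega
  exact Nat.card_of_isEmpty

end PermBase

section PartTransport
set_option linter.unusedSectionVars false

/-- general-type version of `IsSetPartition` -/
def IsPart {γ : Type*} (𝒜 : Finset (Finset γ)) : Prop :=
  (∀ t ∈ 𝒜, t.Nonempty) ∧ ∀ x : γ, ∃! t, t ∈ 𝒜 ∧ x ∈ t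

/-- general-type version of `DistinctBlocks` -/
def DB' {γ : Type*} (𝒜 : Finset (Finset γ)) (S : Set γ) : Prop :=
  ∀ a ∈ S, ∀ b ∈ S, a ≠ b → ∀ t ∈ 𝒜, ¬(a ∈ t ∧ b ∈ t)

lemma isSetPartition_iff_isPart {N : ℕ} (𝒜 : Finset (Finset (Fin N))) :
    IsSetPartition 𝒜 ↔ IsPart 𝒜 := Iff.rfl

lemma distinctBlocks_iff_DB' {N : ℕ} (𝒜 : Finset (Finset (Fin N))) (S : Set (Fin N)) :
    DistinctBlocks 𝒜 S ↔ DB' 𝒜 S := Iff.rfl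

variable {I J : Type*} [DecidableEq I] [DecidableEq J]

lemma mem_finsetCongr2 (q : I ≃ J) (𝒜 : Finset (Finset I)) (t' : Finset J) :
    t' ∈ q.finsetCongr.finsetCongr 𝒜 ↔ ∃ t ∈ 𝒜, t' = t.map q.toEmbedding := by
  rw [Equiv.finsetCongr_apply, Finset.mem_map]
  constructor
  · rintro ⟨t, ht, rfl⟩; exact ⟨t, ht, rfl⟩
  · rintro ⟨t, ht, rfl⟩; exact ⟨t, ht, rfl⟩

lemma isPart_map_of (q : I ≃ J) {𝒜 : Finset (Finset I)}
    (h : IsPart 𝒜) : IsPart (q.finsetCongr.finsetCongr 𝒜) := by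
  constructor
  · intro t' ht'
    obtain ⟨t, ht, rfl⟩ := (mem_finsetCongr2 q 𝒜 t').1 ht'
    exact (h.1 t ht).map
  · intro y
    obtain ⟨t, ⟨ht, hxt⟩, huniq⟩ := h.2 (q.symm y)
    refine ⟨t.map q.toEmbedding, ⟨(mem_finsetCongr2 q 𝒜 _).2 ⟨t, ht, rfl⟩, ?_⟩, ?_⟩
    · rw [show y = q (q.symm y) by simp]
      exact Finset.mem_map' _ |>.2 hxt
    · rintro t' ⟨ht', hyt'⟩
      obtain ⟨s, hs, rfl⟩ := (mem_finsetCongr2 q 𝒜 t').1 ht'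
      have : q.symm y ∈ s := by
        rw [show y = q (q.symm y) by simp] at hyt'
        exact (Finset.mem_map' _).1 hyt'
      rw [huniq s ⟨hs, this⟩]

lemma db'_map_of (q : I ≃ J) {𝒜 : Finset (Finset I)}
    {S : Set I} {T : Set J} (hST : ∀ x, q x ∈ T ↔ x ∈ S)
    (h : DB' 𝒜 S) : DB' (q.finsetCongr.finsetCongr 𝒜) T := by
  intro a ha b hb hab t' ht' hmem
  obtain ⟨hat, hbt⟩ := hmem
  obtain ⟨t, ht, rfl⟩ := (mem_finsetCongr2 q 𝒜 t').1 ht'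
  obtain ⟨x, hx, rfl⟩ := Finset.mem_map.1 hat
  obtain ⟨y, hy, rfl⟩ := Finset.mem_map.1 hbt
  exact h x ((hST x).1 ha) y ((hST y).1 hb)
    (fun hh => hab (by rw [hh])) t ht ⟨hx, hy⟩

/-- transports partition-subtypes along an equivalence of index types. -/
noncomputable def partTransport (q : I ≃ J) (K : ℕ)
    (S : Set I) (T : Set J) (hST : ∀ x, q x ∈ T ↔ x ∈ S) :
    {𝒜 : Finset (Finset I) // IsPart 𝒜 ∧ 𝒜.card = K ∧ DB' 𝒜 S} ≃
    {ℬ : Finset (Finset J) // IsPart ℬ ∧ ℬ.card = K ∧ DB' ℬ T} := by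
  refine Equiv.subtypeEquiv (q.finsetCongr.finsetCongr) (fun 𝒜 => ?_)
  have hsymm : ∀ x, q.symm x ∈ S ↔ x ∈ T := by
    intro x
    rw [← hST (q.symm x)]
    simp
  have hback : (q.symm).finsetCongr.finsetCongr (q.finsetCongr.finsetCongr 𝒜) = 𝒜 := by
    have : (q.finsetCongr.finsetCongr).symm = (q.symm).finsetCongr.finsetCongr := by
      simp
    rw [← this, Equiv.symm_apply_apply]
  constructor
  · rintro ⟨h1, h2, h3⟩
    refine ⟨isPart_map_of q h1, ?_, db'_map_of q hST h3⟩
    rw [Equiv.finsetCongr_apply, Finset.card_map]; exact h2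
  · rintro ⟨h1, h2, h3⟩
    have h1' := isPart_map_of q.symm h1
    have h3' := db'_map_of q.symm (fun x => hsymm x) h3
    rw [hback] at h1' h3'
    refine ⟨h1', ?_, h3'⟩
    rw [Equiv.finsetCongr_apply, Finset.card_map] at h2; exact h2

end PartTransport

section Case2
set_option linter.unusedSectionVars false
variable {γ : Type*} [Fintype γ] [DecidableEq γ]

def lowF (t : Finset (Option γ)) : Finset γ := univ.filter (fun b => some b ∈ t)

lemma mem_lowF {t : Finset (Option γ)} {b : γ} : b ∈ lowF t ↔ some b ∈ t := by simp [lowF]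

def upF (i : γ) (s : Finset γ) : Finset (Option γ) :=
  if i ∈ s then insert none (s.image some) else s.image some

lemma mem_upF_some {i : γ} {s : Finset γ} {b : γ} : some b ∈ upF i s ↔ b ∈ s := by
  unfold upF; split <;> simp

lemma mem_upF_none {i : γ} {s : Finset γ} : (none ∈ upF i s) ↔ i ∈ s := by
  unfold upF
  by_cases h : i ∈ s
  · simp [h]
  · simp [h]

lemma lowF_upF (i : γ) (s : Finset γ) : lowF (upF i s) = s := by
  ext b; rw [mem_lowF, mem_upF_some]

lemma upF_injective (i : γ) : Function.Injective (upF i) := by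
  intro s s' h
  rw [← lowF_upF i s, ← lowF_upF i s', h]

lemma block_eq_of_common {𝒟 : Finset (Finset (Option γ))} (hpart : IsPart 𝒟)
    {t t' : Finset (Option γ)} (ht : t ∈ 𝒟) (ht' : t' ∈ 𝒟) {o : Option γ}
    (ho : o ∈ t) (ho' : o ∈ t') : t = t' := by
  obtain ⟨s, -, huniq⟩ := hpart.2 o
  rw [huniq t ⟨ht, ho⟩, huniq t' ⟨ht', ho'⟩]

lemma block_eq_of_common' {𝒞 : Finset (Finset γ)} (hpart : IsPart 𝒞)
    {t t' : Finset γ} (ht : t ∈ 𝒞) (ht' : t' ∈ 𝒞) {o : γ}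
    (ho : o ∈ t) (ho' : o ∈ t') : t = t' := by
  obtain ⟨s, -, huniq⟩ := hpart.2 o
  rw [huniq t ⟨ht, ho⟩, huniq t' ⟨ht', ho'⟩]

lemma upF_lowF_of_none_mem {t : Finset (Option γ)} {i : γ} (hn : none ∈ t)
    (hi : i ∈ lowF t) : upF i (lowF t) = t := by
  rw [upF, if_pos hi]
  ext o
  match o with
  | none => simpa using hn
  | some b =>
    simp only [Finset.mem_insert, Finset.mem_image, reduceCtorEq, false_or]
    constructor
    · rintro ⟨c, hc, hcb⟩
      obtain rfl : c = b := by injection hcb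
      exact mem_lowF.1 hc
    · intro hb; exact ⟨b, mem_lowF.2 hb, rfl⟩

lemma image_some_lowF {t : Finset (Option γ)} (hn : none ∉ t) :
    (lowF t).image some = t := by
  ext o
  match o with
  | none => simp only [Finset.mem_image, reduceCtorEq]; simpa using hn
  | some b =>
    simp only [Finset.mem_image]
    constructor
    · rintro ⟨c, hc, hcb⟩
      obtain rfl : c = b := by injection hcb
      exact mem_lowF.1 hc
    · intro hb; exact ⟨b, mem_lowF.2 hb, rfl⟩

lemma upF_lowF_of_none_not_mem {t : Finset (Option γ)} {i : γ} (hn : none ∉ t)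
    (hi : i ∉ lowF t) : upF i (lowF t) = t := by
  rw [upF, if_neg hi, image_some_lowF hn]

variable (S : Set γ)

/-- the specials within `Option γ` -/
def someS : Set (Option γ) := {o | ∃ b ∈ S, o = some b}

lemma mem_someS {o : Option γ} : o ∈ someS S ↔ ∃ b ∈ S, o = some b := Iff.rfl

/-- the `C`-condition: `none` shares its block with a special element. -/
def CCond (𝒟 : Finset (Finset (Option γ))) : Prop :=
  ∃ b ∈ S, ∃ t ∈ 𝒟, none ∈ t ∧ some b ∈ t

lemma lowF_injOn {𝒟 : Finset (Finset (Option γ))} (hpart : IsPart 𝒟)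
    (hC : ∀ t ∈ 𝒟, none ∈ t → ∃ b : γ, some b ∈ t) :
    ∀ t ∈ 𝒟, ∀ t' ∈ 𝒟, lowF t = lowF t' → t = t' := by
  intro t ht t' ht' hlow
  by_cases hn : none ∈ t <;> by_cases hn' : none ∈ t'
  · exact block_eq_of_common hpart ht ht' hn hn'
  · obtain ⟨b, hb⟩ := hC t ht hn
    have hb' : some b ∈ t' := mem_lowF.1 (hlow ▸ mem_lowF.2 hb)
    exact block_eq_of_common hpart ht ht' hb hb'
  · obtain ⟨b, hb⟩ := hC t' ht' hn'
    have hbt : some b ∈ t := mem_lowF.1 (hlow.symm ▸ mem_lowF.2 hb)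
    exact block_eq_of_common hpart ht ht' hbt hb
  · rw [← image_some_lowF hn, ← image_some_lowF hn', hlow]

end Case2

section Case2b
set_option linter.unusedSectionVars false
variable {γ : Type*} [Fintype γ] [DecidableEq γ] (S : Set γ)

lemma hC_of_CCond {𝒟 : Finset (Finset (Option γ))} (hpart : IsPart 𝒟)
    (hc : CCond S 𝒟) : ∀ t ∈ 𝒟, none ∈ t → ∃ b : γ, some b ∈ t := by
  obtain ⟨b, hb, t₀, ht₀, hn₀, hb₀⟩ := hc
  intro t ht hn
  exact ⟨b, (block_eq_of_common hpart ht ht₀ hn hn₀) ▸ hb₀⟩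

lemma pred_lowF_image {K : ℕ} {𝒟 : Finset (Finset (Option γ))}
    (hpart : IsPart 𝒟) (hcard : 𝒟.card = K) (hdb : DB' 𝒟 (someS S)) (hc : CCond S 𝒟) :
    IsPart (𝒟.image lowF) ∧ (𝒟.image lowF).card = K ∧ DB' (𝒟.image lowF) S := by
  have hC := hC_of_CCond S hpart hc
  have hinj := lowF_injOn hpart hC
  refine ⟨⟨?_, ?_⟩, ?_, ?_⟩
  · rintro s hs
    obtain ⟨t, ht, rfl⟩ := Finset.mem_image.1 hs
    by_cases hn : none ∈ t
    · obtain ⟨b, hb⟩ := hC t ht hn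
      exact ⟨b, mem_lowF.2 hb⟩
    · obtain ⟨o, ho⟩ := hpart.1 t ht
      match o with
      | none => exact absurd ho hn
      | some b => exact ⟨b, mem_lowF.2 ho⟩
  · intro x
    obtain ⟨t, ⟨ht, hxt⟩, huniq⟩ := hpart.2 (some x)
    refine ⟨lowF t, ⟨Finset.mem_image.2 ⟨t, ht, rfl⟩, mem_lowF.2 hxt⟩, ?_⟩
    rintro s ⟨hs, hxs⟩
    obtain ⟨t', ht', rfl⟩ := Finset.mem_image.1 hs
    rw [huniq t' ⟨ht', mem_lowF.1 hxs⟩]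
  · rw [Finset.card_image_of_injOn (fun t ht t' ht' => hinj t ht t' ht'), hcard]
  · intro a ha b hb hab s hs hmem
    obtain ⟨t, ht, rfl⟩ := Finset.mem_image.1 hs
    exact hdb (some a) ⟨a, ha, rfl⟩ (some b) ⟨b, hb, rfl⟩
      (fun hh => hab (by injection hh)) t ht
      ⟨mem_lowF.1 hmem.1, mem_lowF.1 hmem.2⟩

lemma pred_upF_image {K : ℕ} {𝒞 : Finset (Finset γ)} {i : γ} (hi : i ∈ S)
    (hpart : IsPart 𝒞) (hcard : 𝒞.card = K) (hdb : DB' 𝒞 S) :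
    IsPart (𝒞.image (upF i)) ∧ (𝒞.image (upF i)).card = K ∧
      DB' (𝒞.image (upF i)) (someS S) ∧ CCond S (𝒞.image (upF i)) := by
  obtain ⟨si, ⟨hsi, hisi⟩, hsiuniq⟩ := hpart.2 i
  refine ⟨⟨?_, ?_⟩, ?_, ?_, ?_⟩
  · rintro t ht
    obtain ⟨s, hs, rfl⟩ := Finset.mem_image.1 ht
    obtain ⟨x, hx⟩ := hpart.1 s hs
    exact ⟨some x, mem_upF_some.2 hx⟩
  · intro o
    match o with
    | some x =>
      obtain ⟨s, ⟨hs, hxs⟩, huniq⟩ := hpart.2 x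
      refine ⟨upF i s, ⟨Finset.mem_image.2 ⟨s, hs, rfl⟩, mem_upF_some.2 hxs⟩, ?_⟩
      rintro t ⟨ht, hxt⟩
      obtain ⟨s', hs', rfl⟩ := Finset.mem_image.1 ht
      rw [huniq s' ⟨hs', mem_upF_some.1 hxt⟩]
    | none =>
      refine ⟨upF i si, ⟨Finset.mem_image.2 ⟨si, hsi, rfl⟩, mem_upF_none.2 hisi⟩, ?_⟩
      rintro t ⟨ht, hnt⟩
      obtain ⟨s', hs', rfl⟩ := Finset.mem_image.1 ht
      rw [hsiuniq s' ⟨hs', mem_upF_none.1 hnt⟩]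
  · rw [Finset.card_image_of_injective _ (upF_injective i), hcard]
  · rintro a ⟨a', ha', rfl⟩ b ⟨b', hb', rfl⟩ hab t ht hmem
    obtain ⟨s, hs, rfl⟩ := Finset.mem_image.1 ht
    exact hdb a' ha' b' hb' (fun hh => hab (by rw [hh])) s hs
      ⟨mem_upF_some.1 hmem.1, mem_upF_some.1 hmem.2⟩
  · exact ⟨i, hi, upF i si, Finset.mem_image.2 ⟨si, hsi, rfl⟩,
      mem_upF_none.2 hisi, mem_upF_some.2 hisi⟩

/-- THE case-2 equivalence. -/
noncomputable def case2Equiv (K : ℕ) :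
    {𝒟 : Finset (Finset (Option γ)) //
      (IsPart 𝒟 ∧ 𝒟.card = K ∧ DB' 𝒟 (someS S)) ∧ CCond S 𝒟} ≃
    {b : γ // b ∈ S} × {𝒞 : Finset (Finset γ) // IsPart 𝒞 ∧ 𝒞.card = K ∧ DB' 𝒞 S} := by
  classical
  refine
  { toFun := fun D => ⟨⟨D.2.2.choose, D.2.2.choose_spec.1⟩,
      ⟨D.1.image lowF, pred_lowF_image S D.2.1.1 D.2.1.2.1 D.2.1.2.2 D.2.2⟩⟩
    invFun := fun ic => ⟨ic.2.1.image (upF ic.1.1), by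
      obtain ⟨h1, h2, h3, h4⟩ :=
        pred_upF_image S ic.1.2 ic.2.2.1 ic.2.2.2.1 ic.2.2.2.2
      exact ⟨⟨h1, h2, h3⟩, h4⟩⟩
    left_inv := ?_
    right_inv := ?_ }
  · rintro ⟨𝒟, ⟨hpart, hcard, hdb⟩, hc⟩
    apply Subtype.ext
    simp only
    set i₀ := hc.choose with hi₀
    obtain ⟨hi₀S, t₀, ht₀, hnt₀, hbt₀⟩ := hc.choose_spec
    rw [Finset.image_image]
    have hfix : ∀ t ∈ 𝒟, upF i₀ (lowF t) = t := by
      intro t ht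
      by_cases hn : none ∈ t
      · have : t = t₀ := block_eq_of_common hpart ht ht₀ hn hnt₀
        subst this
        exact upF_lowF_of_none_mem hn (mem_lowF.2 hbt₀)
      · refine upF_lowF_of_none_not_mem hn ?_
        intro hmem
        have hsome : some i₀ ∈ t := mem_lowF.1 hmem
        exact hn ((block_eq_of_common hpart ht ht₀ hsome hbt₀) ▸ hnt₀)
    calc 𝒟.image (upF i₀ ∘ lowF) = 𝒟.image id := Finset.image_congr (fun t ht => hfix t ht)
      _ = 𝒟 := Finset.image_id
  · rintro ⟨⟨i, hiS⟩, ⟨𝒞, hpart, hcard, hdb⟩⟩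
    set 𝒟 := 𝒞.image (upF i) with h𝒟
    have hprod2 : 𝒟.image lowF = 𝒞 := by
      rw [h𝒟, Finset.image_image]
      calc 𝒞.image (lowF ∘ upF i) = 𝒞.image id :=
            Finset.image_congr (fun s _ => lowF_upF i s)
        _ = 𝒞 := Finset.image_id
    have hCC : CCond S 𝒟 := (pred_upF_image S hiS hpart hcard hdb).2.2.2
    -- the chosen witness equals i
    have hwit : hCC.choose = i := by
      obtain ⟨hiS', t, ht, hnt, hbt⟩ := hCC.choose_spec
      obtain ⟨s, hs, rfl⟩ := Finset.mem_image.1 ht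
      have h1 : i ∈ s := mem_upF_none.1 hnt
      have h2 : hCC.choose ∈ s := mem_upF_some.1 hbt
      by_contra hne
      exact hdb hCC.choose hiS' i hiS hne s hs ⟨h2, h1⟩
    apply Prod.ext
    · simp only
      apply Subtype.ext
      simp only
      convert hwit
    · apply Subtype.ext
      simp only
      convert hprod2
  done

end Case2b

section PartAssemble

/-- split of a subtype along a decidable condition -/
noncomputable def subtypeSplit {α : Type*} (p q : α → Prop) :
    {x // p x} ≃ {x // p x ∧ q x} ⊕ {x // p x ∧ ¬ q x} := by
  classical
  exact
  { toFun := fun x => if h : q x.1 then Sum.inl ⟨x.1, x.2, h⟩ else Sum.inr ⟨x.1, x.2, h⟩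
    invFun := fun y => match y with
      | Sum.inl z => ⟨z.1, z.2.1⟩
      | Sum.inr z => ⟨z.1, z.2.1⟩
    left_inv := fun x => by
      by_cases h : q x.1
      · simp [h]
      · simp [h]
    right_inv := fun y => by
      match y with
      | Sum.inl z => simp [z.2.2]
      | Sum.inr z => simp [z.2.2] }

variable (m r : ℕ)

/-- removing the element of value `r` from `Fin ((m+1)+r)` -/
noncomputable def q2 : Fin ((m+1)+r) ≃ Option (Fin (m+r)) where
  toFun x :=
    if h : (x : ℕ) < r then some ⟨(x : ℕ), by omega⟩
    else if h2 : (x : ℕ) = r then none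
    else some ⟨(x : ℕ) - 1, by omega⟩
  invFun o := match o with
    | none => ⟨r, by omega⟩
    | some b => ⟨if (b : ℕ) < r then (b : ℕ) else (b : ℕ) + 1, by split <;> omega⟩
  left_inv x := by
    dsimp only
    split_ifs with h1 h2
    · exact Fin.ext (by simp [h1])
    · exact Fin.ext h2.symm
    · have hlt : ¬ ((x : ℕ) - 1 < r) := by omega
      exact Fin.ext (by simp [hlt]; omega)
  right_inv o := by
    match o with
    | none =>
      dsimp only
      have h1 : ¬ (r < r) := by omega
      rw [dif_neg h1, dif_pos rfl]
    | some b =>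
      by_cases h : (b : ℕ) < r
      · dsimp only
        simp only [if_pos h]
        rw [dif_pos h]
      · dsimp only
        simp only [if_neg h]
        have h1 : ¬ ((b : ℕ) + 1 < r) := by omega
        have h2 : ¬ ((b : ℕ) + 1 = r) := by omega
        rw [dif_neg h1, dif_neg h2]
        simp

lemma q2_hST (x : Fin ((m+1)+r)) :
    q2 m r x ∈ someS {b : Fin (m+r) | (b : ℕ) < r} ↔ x ∈ {y : Fin ((m+1)+r) | (y : ℕ) < r} := by
  simp only [q2, Equiv.coe_fn_mk, Set.mem_setOf_eq, mem_someS]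
  split_ifs with h1 h2
  · constructor
    · intro _; exact h1
    · intro _; exact ⟨⟨(x : ℕ), by omega⟩, h1, rfl⟩
  · constructor
    · rintro ⟨b, hb, hh⟩; exact absurd hh (by simp)
    · intro hh; omega
  · constructor
    · rintro ⟨b, hb, hh⟩
      simp only [Option.some.injEq] at hh
      subst hh
      simp only [Set.mem_setOf_eq] at hb
      omega
    · intro hh; omega

lemma hmr : (m+1)+r = m+(r+1) := by omega

/-- sending `Option (Fin (m+r))` to `Fin (m+(r+1))`, `none ↦ r` -/
noncomputable def q3 : Option (Fin (m+r)) ≃ Fin (m+(r+1)) :=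
  (q2 m r).symm.trans (finCongr (hmr m r))

lemma q3_hST (o : Option (Fin (m+r))) :
    q3 m r o ∈ {x : Fin (m+(r+1)) | (x : ℕ) < r + 1} ↔
      o ∈ (someS {b : Fin (m+r) | (b : ℕ) < r} ∪ {none}) := by
  have hval : ∀ b : Fin (m+r),
      ((q3 m r) (some b) : ℕ) = if (b : ℕ) < r then (b : ℕ) else (b : ℕ) + 1 :=
    fun b => rfl
  have hnone : ((q3 m r) none : ℕ) = r := rfl
  match o with
  | none =>
    simp only [Set.mem_setOf_eq, hnone, Set.mem_union, Set.mem_singleton_iff]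
    exact ⟨fun _ => Or.inr (by trivial), fun _ => by omega⟩
  | some b =>
    simp only [Set.mem_setOf_eq, hval b, Set.mem_union, Set.mem_singleton_iff, mem_someS]
    by_cases h : (b : ℕ) < r
    · rw [if_pos h]
      exact ⟨fun _ => Or.inl ⟨b, h, rfl⟩, fun _ => by omega⟩
    · rw [if_neg h]
      constructor
      · intro hh; omega
      · rintro (⟨c, hc, hh⟩ | hh)
        · simp only [Option.some.injEq] at hh
          subst hh
          exact absurd hc h
        · exact absurd hh (by simp)

end PartAssemble

section PartFinal

lemma case1_iff {γ : Type*} [Fintype γ] [DecidableEq γ] (S : Set γ) (K : ℕ)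
    (𝒟 : Finset (Finset (Option γ))) :
    ((IsPart 𝒟 ∧ 𝒟.card = K ∧ DB' 𝒟 (someS S)) ∧ ¬ CCond S 𝒟) ↔
    (IsPart 𝒟 ∧ 𝒟.card = K ∧ DB' 𝒟 (someS S ∪ {none})) := by
  constructor
  · rintro ⟨⟨h1, h2, h3⟩, h4⟩
    refine ⟨h1, h2, ?_⟩
    rintro a ha b hb hab t ht ⟨hat, hbt⟩
    rcases ha with ha | ha <;> rcases hb with hb | hb
    · exact h3 a ha b hb hab t ht ⟨hat, hbt⟩
    · obtain ⟨a', ha', rfl⟩ := ha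
      rw [Set.mem_singleton_iff] at hb; subst hb
      exact h4 ⟨a', ha', t, ht, hbt, hat⟩
    · obtain ⟨b', hb', rfl⟩ := hb
      rw [Set.mem_singleton_iff] at ha; subst ha
      exact h4 ⟨b', hb', t, ht, hat, hbt⟩
    · rw [Set.mem_singleton_iff] at ha hb
      exact hab (ha.trans hb.symm)
  · rintro ⟨h1, h2, h3⟩
    refine ⟨⟨h1, h2, ?_⟩, ?_⟩
    · intro a ha b hb hab t ht hmem
      exact h3 a (Or.inl ha) b (Or.inl hb) hab t ht hmem
    · rintro ⟨b, hb, t, ht, hnt, hbt⟩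
      exact h3 none (Or.inr rfl) (some b) (Or.inl ⟨b, hb, rfl⟩)
        (by simp) t ht ⟨hnt, hbt⟩

/-- specials subtype is `Fin r` -/
noncomputable def finSpecialEquiv (m r : ℕ) :
    {b : Fin (m+r) // b ∈ {x : Fin (m+r) | (x : ℕ) < r}} ≃ Fin r where
  toFun b := ⟨(b.1 : ℕ), b.2⟩
  invFun i := ⟨⟨(i : ℕ), by omega⟩, by exact i.isLt⟩
  left_inv b := by apply Subtype.ext; apply Fin.ext; rfl
  right_inv i := rfl

noncomputable def partRecEquiv (m r K : ℕ) :
    {𝒜 : Finset (Finset (Fin ((m+1)+r))) //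
        IsPart 𝒜 ∧ 𝒜.card = K ∧ DB' 𝒜 {x | (x : ℕ) < r}} ≃
    {ℬ : Finset (Finset (Fin (m+(r+1)))) //
        IsPart ℬ ∧ ℬ.card = K ∧ DB' ℬ {x | (x : ℕ) < r+1}} ⊕
    (Fin r × {𝒞 : Finset (Finset (Fin (m+r))) //
        IsPart 𝒞 ∧ 𝒞.card = K ∧ DB' 𝒞 {x | (x : ℕ) < r}}) := by
  refine (partTransport (q2 m r) K _ _ (q2_hST m r)).trans ?_
  refine (subtypeSplit _ (CCond {b : Fin (m+r) | (b : ℕ) < r})).trans ?_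
  refine (Equiv.sumComm _ _).trans ?_
  refine Equiv.sumCongr ?_ ?_
  · refine (Equiv.subtypeEquivRight (case1_iff _ K)).trans ?_
    exact partTransport (q3 m r) K _ _ (q3_hST m r)
  · refine (case2Equiv _ K).trans ?_
    exact Equiv.prodCongr (finSpecialEquiv m r) (Equiv.refl _)

lemma isPart_card_le {N : ℕ} {𝒜 : Finset (Finset (Fin N))} (h : IsPart 𝒜) :
    𝒜.card ≤ N := by
  classical
  have hdisj : ∀ t ∈ 𝒜, ∀ t' ∈ 𝒜, t ≠ t' → Disjoint t t' := by
    intro t ht t' ht' hne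
    rw [Finset.disjoint_left]
    intro x hx hx'
    exact hne (block_eq_of_common' h ht ht' hx hx')
  calc 𝒜.card = ∑ _t ∈ 𝒜, 1 := by rw [Finset.card_eq_sum_ones]
    _ ≤ ∑ t ∈ 𝒜, t.card := Finset.sum_le_sum (fun t ht => Finset.card_pos.2 (h.1 t ht))
    _ = (𝒜.biUnion id).card := (Finset.card_biUnion hdisj).symm
    _ ≤ N := by
        have := Finset.card_le_univ (𝒜.biUnion id)
        simpa using this

lemma specials_le_card {N r : ℕ} (hr : r ≤ N) {𝒜 : Finset (Finset (Fin N))}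
    (hpart : IsPart 𝒜) (hdb : DB' 𝒜 {x : Fin N | (x : ℕ) < r}) : r ≤ 𝒜.card := by
  classical
  rw [← card_filter_val_lt (M := N) hr]
  refine Finset.card_le_card_of_injOn (fun x => (hpart.2 x).exists.choose) ?_ ?_
  · intro x hx
    exact (hpart.2 x).exists.choose_spec.1
  · intro x hx y hy hxy
    rw [Finset.mem_coe, Finset.mem_filter] at hx hy
    by_contra hne
    have hxm := (hpart.2 x).exists.choose_spec
    have hym := (hpart.2 y).exists.choose_spec
    have hxy' : (hpart.2 x).exists.choose = (hpart.2 y).exists.choose := hxy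
    refine hdb x hx.2 y hy.2 hne _ hxm.1 ⟨hxm.2, ?_⟩
    rw [hxy']
    exact hym.2

lemma rStirling_eq_card (r n k : ℕ) :
    rStirling r n k = Nat.card {𝒜 : Finset (Finset (Fin (n+r))) //
      IsPart 𝒜 ∧ 𝒜.card = k + r ∧ DB' 𝒜 {x : Fin (n+r) | (x : ℕ) < r}} := rfl

lemma rStirling_succ (m r k : ℕ) :
    rStirling r (m+1) (k+1) = rStirling (r+1) m k + r * rStirling r m (k+1) := by
  rw [rStirling_eq_card, rStirling_eq_card, rStirling_eq_card]
  rw [Nat.card_congr (partRecEquiv m r ((k+1)+r))]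
  have hfr : Nat.card (Fin r) = r := by simp [Nat.card_eq_fintype_card]
  rw [Nat.card_sum, Nat.card_prod, hfr]
  congr 1
  apply Nat.card_congr
  exact Equiv.subtypeEquivRight (fun ℬ => by
    constructor
    · rintro ⟨h1, h2, h3⟩; exact ⟨h1, by omega, h3⟩
    · rintro ⟨h1, h2, h3⟩; exact ⟨h1, by omega, h3⟩)

lemma rStirling_succ_zero (m r : ℕ) :
    rStirling r (m+1) 0 = r * rStirling r m 0 := by
  rw [rStirling_eq_card, rStirling_eq_card]
  rw [Nat.card_congr (partRecEquiv m r (0+r))]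
  have hfr : Nat.card (Fin r) = r := by simp [Nat.card_eq_fintype_card]
  rw [Nat.card_sum, Nat.card_prod, hfr]
  have : IsEmpty {ℬ : Finset (Finset (Fin (m+(r+1)))) //
      IsPart ℬ ∧ ℬ.card = 0 + r ∧ DB' ℬ {x | (x : ℕ) < r+1}} := by
    constructor
    rintro ⟨ℬ, h1, h2, h3⟩
    have := specials_le_card (show r + 1 ≤ m + (r+1) by omega) h1 h3
    omega
  rw [Nat.card_of_isEmpty, zero_add]

lemma rStirling_vanish (r n k : ℕ) (h : n < k) : rStirling r n k = 0 := by
  rw [rStirling_eq_card]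
  have : IsEmpty {𝒜 : Finset (Finset (Fin (n+r))) //
      IsPart 𝒜 ∧ 𝒜.card = k + r ∧ DB' 𝒜 {x : Fin (n+r) | (x : ℕ) < r}} := by
    constructor
    rintro ⟨𝒜, h1, h2, h3⟩
    have := isPart_card_le h1
    omega
  exact Nat.card_of_isEmpty

end PartFinal

section Final

lemma rBell_rec (r m : ℕ) (z : ℝ) :
    rBell r (m+1) z = z * rBell (r+1) m z + (r : ℝ) * rBell r m z := by
  unfold rBell
  rw [Finset.sum_range_succ' (fun k => (rStirling r (m+1) k : ℝ) * z ^ k) (m+1)]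
  have hsum1 : ∀ k ∈ range (m+1), (rStirling r (m+1) (k+1) : ℝ) * z^(k+1)
      = (rStirling (r+1) m k : ℝ) * z^(k+1)
        + (r : ℝ) * ((rStirling r m (k+1) : ℝ) * z^(k+1)) := by
    intro k _
    rw [rStirling_succ]
    push_cast
    ring
  rw [Finset.sum_congr rfl hsum1, Finset.sum_add_distrib]
  rw [show (rStirling r (m+1) 0 : ℝ) * z ^ 0
      = (r : ℝ) * ((rStirling r m 0 : ℝ) * z ^ 0) by
    rw [rStirling_succ_zero]; push_cast; ring]
  have hB : (∑ k ∈ range (m+1), (r : ℝ) * ((rStirling r m (k+1) : ℝ) * z^(k+1)))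
      + (r : ℝ) * ((rStirling r m 0 : ℝ) * z^0)
      = (r : ℝ) * ∑ k ∈ range (m+1), (rStirling r m k : ℝ) * z^k := by
    have h1 := Finset.sum_range_succ'
      (fun k => (r : ℝ) * ((rStirling r m k : ℝ) * z^k)) (m+1)
    rw [Finset.sum_range_succ
      (fun k => (r : ℝ) * ((rStirling r m k : ℝ) * z^k)) (m+1)] at h1
    rw [rStirling_vanish r m (m+1) (by omega)] at h1
    simp only [Nat.cast_zero, zero_mul, mul_zero, add_zero] at h1
    rw [← h1, Finset.mul_sum]
  rw [add_assoc, hB]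
  have hz : z * ∑ k ∈ range (m+1), (rStirling (r+1) m k : ℝ) * z^k
      = ∑ k ∈ range (m+1), (rStirling (r+1) m k : ℝ) * z^(k+1) := by
    rw [Finset.mul_sum]
    apply Finset.sum_congr rfl
    intro k _
    ring
  rw [hz]


/-- $z^n B_m(z;r+n) = \sum_{j=0}^n s_r(n+r,j+r) (-1)^{n-j} B_{m+j}(z;r)$. -/
theorem rBell_inverse_expansion (n m r : ℕ) (z : ℝ) :
    z ^ n * rBell (r + n) m z =
      ∑ j ∈ range (n + 1),
        (rStirlingFirst r n j : ℝ) * (-1 : ℝ) ^ (n - j) * rBell r (m + j) z := by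
  induction n generalizing m with
  | zero =>
    simp [rStirlingFirst_base]
  | succ n IH =>
    have hb := rBell_rec (r+n) m z
    have hb' : z * rBell (r+n+1) m z
        = rBell (r+n) (m+1) z - ((r:ℝ)+(n:ℝ)) * rBell (r+n) m z := by
      rw [hb]; push_cast; ring
    calc z^(n+1) * rBell (r+(n+1)) m z
        = z^n * (z * rBell (r+n+1) m z) := by
          rw [← Nat.add_assoc, pow_succ]; ring
      _ = z^n * rBell (r+n) (m+1) z - ((r:ℝ)+(n:ℝ)) * (z^n * rBell (r+n) m z) := by
          rw [hb']; ring
      _ = (∑ j ∈ range (n+1),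
            (rStirlingFirst r n j : ℝ) * (-1:ℝ)^(n-j) * rBell r ((m+1)+j) z)
          - ((r:ℝ)+(n:ℝ)) * ∑ j ∈ range (n+1),
            (rStirlingFirst r n j : ℝ) * (-1:ℝ)^(n-j) * rBell r (m+j) z := by
          rw [IH (m+1), IH m]
      _ = ∑ j ∈ range ((n+1) + 1),
            (rStirlingFirst r (n+1) j : ℝ) * (-1 : ℝ) ^ ((n+1) - j) * rBell r (m + j) z := by
          rw [Finset.sum_range_succ'
            (fun j => (rStirlingFirst r (n+1) j : ℝ) * (-1:ℝ)^((n+1)-j) * rBell r (m+j) z)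
            (n+1)]
          simp only [Nat.sub_zero, Nat.add_zero]
          have hterm : ∀ j ∈ range (n+1),
              (rStirlingFirst r (n+1) (j+1) : ℝ) * (-1:ℝ)^((n+1)-(j+1)) * rBell r (m+(j+1)) z
              = (rStirlingFirst r n j : ℝ) * (-1:ℝ)^(n-j) * rBell r ((m+1)+j) z
                + ((n:ℝ)+(r:ℝ)) *
                  ((rStirlingFirst r n (j+1) : ℝ) * (-1:ℝ)^(n-j) * rBell r (m+(j+1)) z) := by
            intro j hj
            rw [rStirlingFirst_succ_succ]
            rw [show (n+1)-(j+1) = n-j from Nat.succ_sub_succ n j]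
            rw [show (m+1)+j = m+(j+1) from by omega]
            push_cast
            ring
          rw [Finset.sum_congr rfl hterm, Finset.sum_add_distrib]
          rw [show (rStirlingFirst r (n+1) 0 : ℝ) * (-1:ℝ)^(n+1) * rBell r m z
              = ((n:ℝ)+(r:ℝ)) *
                ((rStirlingFirst r n 0 : ℝ) * (-1:ℝ)^(n+1) * rBell r m z) by
            rw [rStirlingFirst_succ_zero']; push_cast; ring]
          have hgrp : (∑ j ∈ range (n+1), ((n:ℝ)+(r:ℝ)) *
                ((rStirlingFirst r n (j+1) : ℝ) * (-1:ℝ)^(n-j) * rBell r (m+(j+1)) z))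
              + ((n:ℝ)+(r:ℝ)) *
                ((rStirlingFirst r n 0 : ℝ) * (-1:ℝ)^(n+1) * rBell r m z)
              = - (((r:ℝ)+(n:ℝ)) * ∑ j ∈ range (n+1),
                  (rStirlingFirst r n j : ℝ) * (-1:ℝ)^(n-j) * rBell r (m+j) z) := by
            have h1 := Finset.sum_range_succ'
              (fun j => ((n:ℝ)+(r:ℝ)) *
                ((rStirlingFirst r n j : ℝ) * (-1:ℝ)^((n+1)-j) * rBell r (m+j) z)) (n+1)
            rw [Finset.sum_range_succ
              (fun j => ((n:ℝ)+(r:ℝ)) *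
                ((rStirlingFirst r n j : ℝ) * (-1:ℝ)^((n+1)-j) * rBell r (m+j) z)) (n+1)] at h1
            rw [rStirlingFirst_vanish r n (n+1) (by omega)] at h1
            simp only [Nat.cast_zero, zero_mul, mul_zero, add_zero, Nat.sub_zero] at h1
            have h2 : ∀ j ∈ range (n+1),
                ((n:ℝ)+(r:ℝ)) *
                  ((rStirlingFirst r n (j+1) : ℝ) * (-1:ℝ)^((n+1)-(j+1)) * rBell r (m+(j+1)) z)
                = ((n:ℝ)+(r:ℝ)) *
                  ((rStirlingFirst r n (j+1) : ℝ) * (-1:ℝ)^(n-j) * rBell r (m+(j+1)) z) := by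
              intro j hj
              rw [show (n+1)-(j+1) = n-j from Nat.succ_sub_succ n j]
            rw [Finset.sum_congr rfl h2] at h1
            rw [← h1]
            have h3 : ∀ j ∈ range (n+1),
                ((n:ℝ)+(r:ℝ)) *
                  ((rStirlingFirst r n j : ℝ) * (-1:ℝ)^((n+1)-j) * rBell r (m+j) z)
                = - (((r:ℝ)+(n:ℝ)) *
                  ((rStirlingFirst r n j : ℝ) * (-1:ℝ)^(n-j) * rBell r (m+j) z)) := by
              intro j hj
              rw [Finset.mem_range] at hj
              have hj' : (n+1) - j = (n-j) + 1 := by omega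
              rw [hj', pow_succ]
              ring
            rw [Finset.sum_congr rfl h3, Finset.sum_neg_distrib, ← Finset.mul_sum]
          rw [add_assoc, hgrp]
          ring

end Final
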